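/- With O, O~, p, c, d, p~_i, e_i, and p_{i,n} as above: for all n ≥ d, one has p^n O ⊆ p_{1,n} ∩ ⋯ ∩ p_{g,n} ⊆ p^{n-d} O. -/

import Mathlib

/-- A flat `ℤ`-module is torsion-free. -/
lemma stmt7_flat_smul_inj (M : Type) [AddCommGroup M] [Module ℤ M] [Module.Flat ℤ M]
    (m : ℤ) (hm : m ≠ 0) (a : M) (ha : m • a = 0) : a = 0 := by
  let f : ℤ →ₗ[ℤ] ℤ := m • LinearMap.id
  have hf : Function.Injective f := by
    intro x y hxy
    simpa [f, mul_comm] using mul_left_cancel₀ hm (by simpa [f, smul_eq_mul] using hxy)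
  have hinj := Module.Flat.rTensor_preserves_injective_linearMap (M := M) f hf
  have h1 : f.rTensor M (1 ⊗ₜ[ℤ] a) = 0 := by
    have hh : (m • (1 : ℤ)) ⊗ₜ[ℤ] a = (1 : ℤ) ⊗ₜ[ℤ] (m • a) := by
      have hm' := LinearMap.map_smul (TensorProduct.mk ℤ ℤ M 1) m a
      rw [TensorProduct.mk_apply, TensorProduct.mk_apply] at hm'
      have hb' := Int.cast_smul_eq_zsmul (R := ℤ) m a
      rw [Int.cast_id] at hb'
      rw [hb'] at hm'
      rw [hm', TensorProduct.smul_tmul']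
    have hb := Int.cast_smul_eq_zsmul (R := ℤ) m a
    rw [Int.cast_id] at hb
    rw [ha, TensorProduct.tmul_zero] at hh
    simpa only [f, LinearMap.rTensor_tmul, LinearMap.smul_apply, LinearMap.id_apply,
      smul_eq_mul, mul_one] using hh
  have h2 : (1 : ℤ) ⊗ₜ[ℤ] a = 0 := hinj (by simpa using h1)
  have := congrArg (TensorProduct.lid ℤ M) h2
  simpa using this

/-- A finite product of pairwise coprime ideals equals their infimum. -/
lemma stmt7_prod_eq_inf {R : Type*} [CommRing R] {ι : Type*} (s : Finset ι)
    (J : ι → Ideal R) (h : ∀ i ∈ s, ∀ j ∈ s, i ≠ j → J i ⊔ J j = ⊤) :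
    ∏ i ∈ s, J i = ⨅ i ∈ s, J i := by
  classical
  induction s using Finset.induction_on with
  | empty => simp
  | @insert a s ha ih =>
    have hcop : J a ⊔ ∏ i ∈ s, J i = ⊤ :=
      Ideal.sup_prod_eq_top fun i hi =>
        h a (Finset.mem_insert_self a s) i (Finset.mem_insert_of_mem hi)
          (fun hne => ha (hne ▸ hi))
    rw [Finset.prod_insert ha, Ideal.mul_eq_inf_of_coprime hcop,
      ih (fun i hi j hj hij => h i (Finset.mem_insert_of_mem hi) j
        (Finset.mem_insert_of_mem hj) hij), Finset.iInf_insert]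

/-- With `O`, its normalization `Õ = ∏ j, D j`, `p`, `c`, `d`, the primes
`P i` with ramification indices `e i`, and `p_{i,n} = (P i ^ (e i * n)) ∩ O` as in the
paper: for all `n ≥ d`, one has `pⁿO ⊆ p_{1,n} ∩ ⋯ ∩ p_{g,n} ⊆ p^(n-d) O`. -/
theorem stmt7
    (O : Type) [CommRing O] [IsReduced O] [Module.Finite ℤ O] [Module.Flat ℤ O]
    (h : ℕ) (D : Fin h → Type) [∀ j, CommRing (D j)] [∀ j, IsDomain (D j)]
    [∀ j, IsDedekindDomain (D j)]
    [Algebra O (∀ j, D j)]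
    (hinj : Function.Injective (algebraMap O (∀ j, D j)))
    [Algebra.IsIntegral O (∀ j, D j)]
    (p c d : ℕ) (hp : p.Prime) (hc : Nat.Coprime c p) (hc0 : 0 < c)
    (hexp : ∀ y : ∀ j, D j, (c * p ^ d : ℕ) • y ∈ (algebraMap O (∀ j, D j)).range)
    (g : ℕ) (P : Fin g → Ideal (∀ j, D j)) (e : Fin g → ℕ)
    (hP : ∀ i, (P i).IsMaximal) (hPne : ∀ i j : Fin g, i ≠ j → P i ≠ P j)
    (he : ∀ i, 0 < e i)
    (hfact : Ideal.span {((p : ℕ) : ∀ j, D j)} = ∏ i, P i ^ (e i))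
    (n : ℕ) (hn : d ≤ n) :
    Ideal.span {(p : O) ^ n} ≤
        (⨅ i : Fin g, (P i ^ (e i * n)).comap (algebraMap O (∀ j, D j))) ∧
    (⨅ i : Fin g, (P i ^ (e i * n)).comap (algebraMap O (∀ j, D j))) ≤
        Ideal.span {(p : O) ^ (n - d)} := by
  set f := algebraMap O (∀ j, D j) with hf
  -- the product of the big powers equals span {p^n}
  have hprodpow : ∏ i : Fin g, P i ^ (e i * n) = Ideal.span {((p : ℕ) : ∀ j, D j) ^ n} := by
    rw [← Ideal.span_singleton_pow, hfact, ← Finset.prod_pow]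
    exact Finset.prod_congr rfl fun i _ => pow_mul _ _ _
  have hcop : ∀ i ∈ (Finset.univ : Finset (Fin g)), ∀ j ∈ (Finset.univ : Finset (Fin g)),
      i ≠ j → P i ^ (e i * n) ⊔ P j ^ (e j * n) = ⊤ := by
    intro i _ j _ hij
    exact Ideal.pow_sup_pow_eq_top ((hP i).coprime_of_ne (hP j) (hPne i j hij))
  have hprodinf : ∏ i : Fin g, P i ^ (e i * n) = ⨅ i : Fin g, P i ^ (e i * n) := by
    rw [stmt7_prod_eq_inf Finset.univ _ hcop]
    simp
  constructor
  · -- first inclusion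
    rw [Ideal.span_singleton_le_iff_mem, Ideal.mem_iInf]
    intro i
    rw [Ideal.mem_comap, map_pow, map_natCast, pow_mul]
    refine Ideal.pow_mem_pow ?_ n
    have hmem : ((p : ℕ) : ∀ j, D j) ∈ Ideal.span {((p : ℕ) : ∀ j, D j)} :=
      Ideal.mem_span_singleton_self _
    rw [hfact] at hmem
    exact (le_trans Ideal.prod_le_inf (Finset.inf_le (Finset.mem_univ i))) hmem
  · -- second inclusion
    intro x hx
    rw [Ideal.mem_iInf] at hx
    have hx1 : f x ∈ Ideal.span {((p : ℕ) : ∀ j, D j) ^ n} := by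
      rw [← hprodpow, hprodinf, Ideal.mem_iInf]
      intro i
      exact hx i
    rw [Ideal.mem_span_singleton'] at hx1
    obtain ⟨z, hz⟩ := hx1
    obtain ⟨w, hw⟩ := hexp z
    -- f ((c*p^d) • x) = f (w * p^n)
    have key : f ((c * p ^ d : ℕ) • x) = f (w * (p : O) ^ n) := by
      rw [map_nsmul, ← hz, map_mul, map_pow, map_natCast, hw, smul_mul_assoc]
    have heq : (c * p ^ d : ℕ) • x = w * (p : O) ^ n := hinj key
    have heq2 : (c : O) * (p : O) ^ d * x = w * (p : O) ^ n := by
      rw [← heq, nsmul_eq_mul]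
      push_cast
      ring
    -- cancel p^d using torsion-freeness
    have hcancel : (c : O) * x = w * (p : O) ^ (n - d) := by
      have hpow : (p : O) ^ n = (p : O) ^ d * (p : O) ^ (n - d) := by
        rw [← pow_add, Nat.add_sub_cancel' hn]
      have hz0 : ((p : ℤ) ^ d) • ((c : O) * x - w * (p : O) ^ (n - d)) = 0 := by
        rw [zsmul_eq_mul, mul_sub]
        push_cast
        rw [sub_eq_zero]
        calc (p : O) ^ d * ((c : O) * x) = (c : O) * (p : O) ^ d * x := by ring
          _ = w * (p : O) ^ n := heq2
          _ = (p : O) ^ d * (w * (p : O) ^ (n - d)) := by rw [hpow]; ring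
      have := stmt7_flat_smul_inj O ((p : ℤ) ^ d)
        (pow_ne_zero d (by exact_mod_cast hp.ne_zero)) _ hz0
      exact sub_eq_zero.mp this
    -- use coprimality of c and p^(n-d)
    have hcop2 : IsCoprime (c : ℤ) ((p : ℤ) ^ (n - d)) := by
      rw [show ((p : ℤ) ^ (n - d)) = ((p ^ (n - d) : ℕ) : ℤ) by push_cast; ring]
      exact Nat.isCoprime_iff_coprime.mpr (hc.pow_right _)
    obtain ⟨u, v, huv⟩ := hcop2
    have huvO : (u : O) * (c : O) + (v : O) * (p : O) ^ (n - d) = 1 := by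
      have := congrArg (fun t : ℤ => (t : O)) huv
      push_cast at this
      exact this
    rw [Ideal.mem_span_singleton]
    have h1 : (p : O) ^ (n - d) ∣ (c : O) * x := ⟨w, by rw [hcancel]; ring⟩
    have h2 : (p : O) ^ (n - d) ∣ (v : O) * (p : O) ^ (n - d) * x := ⟨(v : O) * x, by ring⟩
    have h3 : (p : O) ^ (n - d) ∣ (u : O) * ((c : O) * x) + (v : O) * (p : O) ^ (n - d) * x :=
      dvd_add (h1.mul_left _) h2
    have h4 : (u : O) * ((c : O) * x) + (v : O) * (p : O) ^ (n - d) * x = x := by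
      rw [show (u : O) * ((c : O) * x) + (v : O) * (p : O) ^ (n - d) * x
            = ((u : O) * (c : O) + (v : O) * (p : O) ^ (n - d)) * x by ring, huvO, one_mul]
    rwa [h4] at h3
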